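/- Let t = (t₁,t₂,t₃) ∈ ℕ³, k = t₁+t₂+t₃+2, and let w ≥ k be an integer. Let (C_n)_{n∈ℕ} be a sequence of real numbers such that C_n takes arbitrary fixed values for n ≤ w and, for all n > w, C_n = T_n + Σ_{j=0}^{n−2} w_{n,j}·C_j, where the toll sequence satisfies T_n = a·n + O(1) for a constant a > 0. Then C_n / (n·ln n) → a / H(t) as n → ∞, where H(t) is the discrete entropy of t. -/

import Mathlib

open Finset Filter Real Asymptotics

/-- The `n`-th harmonic number `H_n = ∑_{i=1}^n 1/i`. -/
noncomputable def harm (n : ℕ) : ℝ := ∑ i ∈ Finset.range n, (1 : ℝ) / (i + 1)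

/-- The discrete entropy `H(t)` of `t = (t₁,t₂,t₃)` with `k = t₁+t₂+t₃+2`. -/
noncomputable def Hdisc (t1 t2 t3 : ℕ) : ℝ :=
  ((t1 : ℝ) + 1) / ((t1 : ℝ) + t2 + t3 + 3) * (harm (t1 + t2 + t3 + 3) - harm (t1 + 1))
  + ((t2 : ℝ) + 1) / ((t1 : ℝ) + t2 + t3 + 3) * (harm (t1 + t2 + t3 + 3) - harm (t2 + 1))
  + ((t3 : ℝ) + 1) / ((t1 : ℝ) + t2 + t3 + 3) * (harm (t1 + t2 + t3 + 3) - harm (t3 + 1))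

/-- Rising factorial `a^{(m)} = a (a+1) ⋯ (a+m−1)`. -/
def ascNat (a m : ℕ) : ℕ := ∏ i ∈ Finset.range m, (a + i)

/-- `π_l(N, i) = binom(N,i) (t+1)^{(i)} (k−t)^{(N−i)} / (k+1)^{(N)}` for `0 ≤ i ≤ N`, else `0`. -/
noncomputable def piw (t k N : ℕ) (i : ℤ) : ℝ :=
  if 0 ≤ i ∧ i ≤ (N : ℤ) then
    (N.choose i.toNat : ℝ) * (ascNat (t + 1) i.toNat : ℝ)
      * (ascNat (k - t) (N - i.toNat) : ℝ) / (ascNat (k + 1) N : ℝ)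
  else 0

/-- The recurrence weights `w_{n,j} = ∑_{l=1}^3 π_l(n−k, j−t_l)`. -/
noncomputable def wgt (t1 t2 t3 n j : ℕ) : ℝ :=
  piw t1 (t1 + t2 + t3 + 2) (n - (t1 + t2 + t3 + 2)) ((j : ℤ) - t1)
  + piw t2 (t1 + t2 + t3 + 2) (n - (t1 + t2 + t3 + 2)) ((j : ℤ) - t2)
  + piw t3 (t1 + t2 + t3 + 2) (n - (t1 + t2 + t3 + 2)) ((j : ℤ) - t3)

/- ### Basic lemmas -/

lemma harm_succ (n : ℕ) : harm (n+1) = harm n + 1/((n:ℝ)+1) := by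
  simp [harm, Finset.sum_range_succ]

lemma harm_lt {m n : ℕ} (h : m < n) : harm m < harm n := by
  have hsub : Finset.range m ⊆ Finset.range n := Finset.range_subset_range.2 h.le
  refine Finset.sum_lt_sum_of_subset hsub (i := m) (by simp [h]) (by simp) (by positivity)
    (fun j _ _ => by positivity)

lemma ascNat_zero (a : ℕ) : ascNat a 0 = 1 := rfl

lemma ascNat_succ (a m : ℕ) : ascNat a (m+1) = ascNat a m * (a + m) :=
  Finset.prod_range_succ _ _

lemma ascNat_pos {a : ℕ} (ha : 0 < a) (m : ℕ) : 0 < ascNat a m :=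
  Finset.prod_pos (fun i _ => by omega)

lemma piw_nonneg (t k N : ℕ) (i : ℤ) : 0 ≤ piw t k N i := by
  unfold piw; split
  · positivity
  · exact le_refl _

lemma piw_of_neg (t k N : ℕ) {i : ℤ} (h : i < 0) : piw t k N i = 0 := by
  unfold piw; rw [if_neg]; rintro ⟨h0, -⟩; omega

lemma piw_of_gt (t k N : ℕ) {i : ℤ} (h : (N:ℤ) < i) : piw t k N i = 0 := by
  unfold piw; rw [if_neg]; rintro ⟨-, h0⟩; omega

lemma piw_natCast (t k N m : ℕ) :
    piw t k N (m : ℤ) = if m ≤ N then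
      (N.choose m : ℝ) * (ascNat (t + 1) m : ℝ) * (ascNat (k - t) (N - m) : ℝ)
        / (ascNat (k + 1) N : ℝ)
    else 0 := by
  rcases le_or_gt m N with h | h
  · rw [if_pos h]
    unfold piw
    rw [if_pos ⟨Int.natCast_nonneg m, by exact_mod_cast h⟩, Int.toNat_natCast]
  · rw [if_neg (by omega)]
    exact piw_of_gt t k N (by exact_mod_cast h)

lemma piw_zero (t k : ℕ) (i : ℤ) : piw t k 0 i = if i = 0 then 1 else 0 := by
  rcases eq_or_ne i 0 with rfl | h
  · rw [if_pos rfl]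
    unfold piw
    rw [if_pos ⟨le_refl _, by simp⟩]
    simp [ascNat_zero]
  · rw [if_neg h]
    rcases lt_or_gt_of_ne h with h' | h'
    · exact piw_of_neg _ _ _ h'
    · exact piw_of_gt _ _ _ (by exact_mod_cast h')
/- ### The Pólya-urn (Pascal) recurrence for `piw` -/

lemma div_urn_helper (e D X Y Z c2 c3 : ℝ) (he : e ≠ 0) (hD : D ≠ 0)
    (h : X = c2 * Y + c3 * Z) :
    e * (X / (D * e)) = c2 * (Y / D) + c3 * (Z / D) := by
  rw [h]; field_simp

lemma choose_asc_identity (t k N m' : ℕ) (ht : t + 2 ≤ k) (hm : m' + 1 ≤ N) :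
    (N+1).choose (m'+1) * ascNat (t+1) (m'+1) * ascNat (k-t) (N+1-(m'+1))
    = (k - t + (N - (m'+1))) * ((N.choose (m'+1)) * ascNat (t+1) (m'+1) * ascNat (k-t) (N-(m'+1)))
      + (t + (m'+1)) * ((N.choose m') * ascNat (t+1) m' * ascNat (k-t) (N - (m'+1) + 1)) := by
  have h1 : N + 1 - (m'+1) = (N - (m'+1)) + 1 := by omega
  rw [h1, ascNat_succ, ascNat_succ, Nat.choose_succ_succ]
  ring

lemma piw_urn (t k N : ℕ) (ht : t + 2 ≤ k) (i : ℤ) :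
    ((k:ℝ) + 1 + N) * piw t k (N+1) i
      = ((k:ℝ) - t + N - i) * piw t k N i + ((t:ℝ) + i) * piw t k N (i - 1) := by
  have hD : (0:ℝ) < (ascNat (k+1) N : ℝ) := by exact_mod_cast ascNat_pos (by omega) N
  have hDsucc : (ascNat (k+1) (N+1) : ℝ) = (ascNat (k+1) N : ℝ) * ((k:ℝ) + 1 + N) := by
    rw [ascNat_succ]; push_cast; ring
  have he : ((k:ℝ) + 1 + N) ≠ 0 := by positivity
  have hkt : ((k - t : ℕ) : ℝ) = (k:ℝ) - t := by
    have h1 : t ≤ k := by omega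
    push_cast [h1]; ring
  rcases lt_or_ge i 0 with hi | hi
  · rw [piw_of_neg _ _ _ hi, piw_of_neg _ _ _ hi, piw_of_neg _ _ _ (by omega)]
    ring
  · obtain ⟨m, rfl⟩ := Int.eq_ofNat_of_zero_le hi
    rcases Nat.eq_zero_or_eq_succ_pred m with rfl | hm0
    · -- m = 0
      have hm1 : ((0:ℕ):ℤ) - 1 < 0 := by norm_num
      rw [piw_of_neg _ _ _ hm1, piw_natCast, piw_natCast, if_pos (Nat.zero_le _),
        if_pos (Nat.zero_le _)]
      simp only [Nat.choose_zero_right, ascNat_zero, Nat.sub_zero, Nat.cast_one]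
      rw [hDsucc, ascNat_succ]
      push_cast
      rw [hkt]
      field_simp
      ring
    · obtain ⟨m', rfl⟩ : ∃ m', m = m' + 1 := ⟨m - 1, hm0⟩
      have hcast1 : ((m' + 1 : ℕ) : ℤ) - 1 = ((m' : ℕ) : ℤ) := by push_cast; ring
      rw [hcast1]
      rcases le_or_gt (m' + 1) N with hm | hm
      · -- main case
        have hmsub : N - m' = N - (m'+1) + 1 := by omega
        rw [piw_natCast, piw_natCast, piw_natCast, if_pos (by omega : m'+1 ≤ N+1),
          if_pos hm, if_pos (by omega : m' ≤ N), hmsub, hDsucc]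
        refine div_urn_helper _ _ _ _ _ _ _ he hD.ne' ?_
        have keyR := congrArg (Nat.cast : ℕ → ℝ) (choose_asc_identity t k N m' ht hm)
        push_cast [Nat.cast_sub (show t ≤ k by omega), Nat.cast_sub hm,
          Nat.cast_sub (show m'+1 ≤ N+1 by omega)] at keyR
        push_cast
        linear_combination keyR
      · rcases eq_or_lt_of_le (by omega : N + 1 ≤ m' + 1) with heq | hgt
        · -- m = N+1
          have hNm : m' = N := by omega
          subst hNm
          rw [piw_of_gt t k m' (by push_cast; omega), piw_natCast, piw_natCast,
            if_pos (le_refl _), if_pos (le_refl _)]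
          simp only [Nat.choose_self, Nat.sub_self, ascNat_zero, Nat.cast_one]
          rw [hDsucc, ascNat_succ]
          push_cast
          field_simp
          ring
        · -- m > N+1
          rw [piw_of_gt t k (N+1) (by exact_mod_cast hgt), piw_of_gt t k N (by exact_mod_cast hm),
            piw_of_gt t k N (by push_cast; omega)]
          ring
/- ### Weight-level lemmas -/

lemma wgt_nonneg (t1 t2 t3 n j : ℕ) : 0 ≤ wgt t1 t2 t3 n j :=
  add_nonneg (add_nonneg (piw_nonneg _ _ _ _) (piw_nonneg _ _ _ _)) (piw_nonneg _ _ _ _)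

lemma wgt_last (t1 t2 t3 : ℕ) {n : ℕ} (hn : t1 + t2 + t3 + 2 ≤ n) :
    wgt t1 t2 t3 n (n-1) = 0 := by
  unfold wgt
  rw [piw_of_gt _ _ _ (by omega), piw_of_gt _ _ _ (by omega), piw_of_gt _ _ _ (by omega)]
  ring

lemma wgt_urn (t1 t2 t3 : ℕ) {n : ℕ} (hn : t1 + t2 + t3 + 2 ≤ n) (j : ℕ) :
    ((n:ℝ)+1) * wgt t1 t2 t3 (n+1) j
      = ((n:ℝ) - j) * wgt t1 t2 t3 n j
        + (j:ℝ) * (piw t1 (t1+t2+t3+2) (n - (t1+t2+t3+2)) ((j:ℤ) - t1 - 1)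
          + piw t2 (t1+t2+t3+2) (n - (t1+t2+t3+2)) ((j:ℤ) - t2 - 1)
          + piw t3 (t1+t2+t3+2) (n - (t1+t2+t3+2)) ((j:ℤ) - t3 - 1)) := by
  have hN : n + 1 - (t1+t2+t3+2) = (n - (t1+t2+t3+2)) + 1 := by omega
  unfold wgt
  rw [hN]
  have e1 := piw_urn t1 (t1+t2+t3+2) (n - (t1+t2+t3+2)) (by omega) ((j:ℤ) - t1)
  have e2 := piw_urn t2 (t1+t2+t3+2) (n - (t1+t2+t3+2)) (by omega) ((j:ℤ) - t2)
  have e3 := piw_urn t3 (t1+t2+t3+2) (n - (t1+t2+t3+2)) (by omega) ((j:ℤ) - t3)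
  push_cast [Nat.cast_sub hn] at e1 e2 e3 ⊢
  linear_combination e1 + e2 + e3

lemma wgtm_succ (t1 t2 t3 n j : ℕ) :
    piw t1 (t1+t2+t3+2) (n - (t1+t2+t3+2)) (((j+1 : ℕ):ℤ) - t1 - 1)
    + piw t2 (t1+t2+t3+2) (n - (t1+t2+t3+2)) (((j+1 : ℕ):ℤ) - t2 - 1)
    + piw t3 (t1+t2+t3+2) (n - (t1+t2+t3+2)) (((j+1 : ℕ):ℤ) - t3 - 1)
    = wgt t1 t2 t3 n j := by
  unfold wgt
  have h1 : ∀ t : ℕ, ((j+1 : ℕ):ℤ) - t - 1 = (j:ℤ) - t := by intro t; push_cast; ring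
  rw [h1, h1, h1]

lemma sum_step (t1 t2 t3 : ℕ) {n : ℕ} (hn : t1+t2+t3+2 ≤ n) (φ : ℕ → ℝ) :
    ((n:ℝ)+1) * ∑ j ∈ Finset.range n, wgt t1 t2 t3 (n+1) j * φ j
    = ∑ j ∈ Finset.range (n-1), wgt t1 t2 t3 n j
        * (((n:ℝ) - (j:ℝ)) * φ j + ((j:ℝ)+1) * φ (j+1)) := by
  have L1 : ((n:ℝ)+1) * ∑ j ∈ Finset.range n, wgt t1 t2 t3 (n+1) j * φ j
      = (∑ j ∈ Finset.range n, ((n:ℝ) - j) * wgt t1 t2 t3 n j * φ j)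
        + ∑ j ∈ Finset.range n, (j:ℝ) *
            (piw t1 (t1+t2+t3+2) (n - (t1+t2+t3+2)) ((j:ℤ) - t1 - 1)
            + piw t2 (t1+t2+t3+2) (n - (t1+t2+t3+2)) ((j:ℤ) - t2 - 1)
            + piw t3 (t1+t2+t3+2) (n - (t1+t2+t3+2)) ((j:ℤ) - t3 - 1)) * φ j := by
    rw [Finset.mul_sum, ← Finset.sum_add_distrib]
    refine Finset.sum_congr rfl (fun j _ => ?_)
    have h := wgt_urn t1 t2 t3 hn j
    calc ((n:ℝ)+1) * (wgt t1 t2 t3 (n+1) j * φ j)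
        = (((n:ℝ)+1) * wgt t1 t2 t3 (n+1) j) * φ j := by ring
      _ = _ := by rw [h]; ring
  rw [L1]
  obtain ⟨n', rfl⟩ : ∃ n', n = n' + 1 := ⟨n-1, by omega⟩
  simp only [Nat.add_sub_cancel]
  rw [Finset.sum_range_succ, Finset.sum_range_succ']
  have hlast : wgt t1 t2 t3 (n'+1) n' = 0 := by
    have h := wgt_last t1 t2 t3 (n := n'+1) hn
    simpa using h
  rw [hlast]
  simp only [Nat.cast_zero, zero_mul, mul_zero, add_zero]
  rw [← Finset.sum_add_distrib]
  refine Finset.sum_congr rfl (fun j hj => ?_)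
  rw [wgtm_succ]
  push_cast
  ring

/- ### The three exact sum identities -/

lemma sum_base (t1 t2 t3 : ℕ) (φ : ℕ → ℝ) :
    ∑ j ∈ Finset.range (t1+t2+t3+2-1), wgt t1 t2 t3 (t1+t2+t3+2) j * φ j
      = φ t1 + φ t2 + φ t3 := by
  have hw : ∀ j : ℕ, wgt t1 t2 t3 (t1+t2+t3+2) j
      = (if j = t1 then 1 else 0) + (if j = t2 then 1 else 0) + (if j = t3 then 1 else 0) := by
    intro j
    unfold wgt
    rw [Nat.sub_self]
    simp only [piw_zero, sub_eq_zero, Nat.cast_inj]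
  simp only [hw, add_mul, Finset.sum_add_distrib, ite_mul, one_mul, zero_mul]
  rw [Finset.sum_ite_eq' _ t1 φ, Finset.sum_ite_eq' _ t2 φ, Finset.sum_ite_eq' _ t3 φ]
  rw [if_pos (by simp only [Finset.mem_range]; omega),
    if_pos (by simp only [Finset.mem_range]; omega),
    if_pos (by simp only [Finset.mem_range]; omega)]

lemma sum_wgt (t1 t2 t3 : ℕ) {n : ℕ} (hn : t1+t2+t3+2 ≤ n) :
    ∑ j ∈ Finset.range (n-1), wgt t1 t2 t3 n j = 3 := by
  induction n, hn using Nat.le_induction with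
  | base =>
    have h := sum_base t1 t2 t3 (fun _ => (1:ℝ))
    simp only [mul_one] at h
    rw [h]
    norm_num
  | succ n hn ih =>
    have hne : ((n:ℝ)+1) ≠ 0 := by positivity
    have hstep := sum_step t1 t2 t3 hn (fun _ => (1:ℝ))
    simp only [mul_one] at hstep
    have h2 : ∑ j ∈ Finset.range (n-1), wgt t1 t2 t3 n j * (((n:ℝ) - j) + ((j:ℝ)+1))
        = ((n:ℝ)+1) * 3 := by
      rw [Finset.sum_congr rfl (fun j _ =>
        show wgt t1 t2 t3 n j * (((n:ℝ) - j) + ((j:ℝ)+1)) = wgt t1 t2 t3 n j * ((n:ℝ)+1)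
        from by ring)]
      rw [← Finset.sum_mul, ih]
      ring
    have h3 : ((n:ℝ)+1) * ∑ j ∈ Finset.range n, wgt t1 t2 t3 (n+1) j = ((n:ℝ)+1) * 3 := by
      rw [hstep, h2]
    have h4 := mul_left_cancel₀ hne h3
    simpa using h4

lemma sum_wgt_lin (t1 t2 t3 : ℕ) {n : ℕ} (hn : t1+t2+t3+2 ≤ n) :
    ∑ j ∈ Finset.range (n-1), wgt t1 t2 t3 n j * ((j:ℝ)+1) = (n:ℝ)+1 := by
  induction n, hn using Nat.le_induction with
  | base =>
    have h := sum_base t1 t2 t3 (fun j => (j:ℝ)+1)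
    rw [h]
    push_cast
    ring
  | succ n hn ih =>
    have hne : ((n:ℝ)+1) ≠ 0 := by positivity
    have hstep := sum_step t1 t2 t3 hn (fun j => (j:ℝ)+1)
    have h2 : ∑ j ∈ Finset.range (n-1), wgt t1 t2 t3 n j
          * (((n:ℝ) - j) * ((j:ℝ)+1) + ((j:ℝ)+1) * (((j+1:ℕ):ℝ)+1))
        = ((n:ℝ)+1) * (((n:ℝ)+1)+1) := by
      rw [Finset.sum_congr rfl (fun j _ =>
        show wgt t1 t2 t3 n j * (((n:ℝ) - j) * ((j:ℝ)+1) + ((j:ℝ)+1) * (((j+1:ℕ):ℝ)+1))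
          = (wgt t1 t2 t3 n j * ((j:ℝ)+1)) * ((n:ℝ)+2)
        from by push_cast; ring)]
      rw [← Finset.sum_mul, ih]
      ring
    have h3 := hstep.trans h2
    have h4 := mul_left_cancel₀ hne h3
    simp only [Nat.add_sub_cancel]
    rw [h4]
    push_cast
    ring

lemma Hdisc_mul (t1 t2 t3 : ℕ) :
    ((t1:ℝ)+t2+t3+3) * Hdisc t1 t2 t3
      = ((t1:ℝ)+t2+t3+3) * harm (t1+t2+t3+3)
        - (((t1:ℝ)+1)*harm (t1+1) + ((t2:ℝ)+1)*harm (t2+1) + ((t3:ℝ)+1)*harm (t3+1)) := by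
  have hd : ((t1:ℝ)+t2+t3+3) ≠ 0 := by positivity
  unfold Hdisc
  field_simp
  ring

lemma sum_wgt_harm (t1 t2 t3 : ℕ) {n : ℕ} (hn : t1+t2+t3+2 ≤ n) :
    ∑ j ∈ Finset.range (n-1), wgt t1 t2 t3 n j * (((j:ℝ)+1) * harm (j+1))
      = ((n:ℝ)+1) * (harm (n+1) - Hdisc t1 t2 t3) := by
  induction n, hn using Nat.le_induction with
  | base =>
    have h := sum_base t1 t2 t3 (fun j => ((j:ℝ)+1) * harm (j+1))
    rw [h]
    have hidx : t1+t2+t3+2+1 = t1+t2+t3+3 := by omega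
    rw [hidx]
    have hm := Hdisc_mul t1 t2 t3
    push_cast
    linarith [hm]
  | succ n hn ih =>
    have hne : ((n:ℝ)+1) ≠ 0 := by positivity
    have hstep := sum_step t1 t2 t3 hn (fun j => ((j:ℝ)+1) * harm (j+1))
    have h2 : ∑ j ∈ Finset.range (n-1), wgt t1 t2 t3 n j
          * (((n:ℝ) - j) * (((j:ℝ)+1) * harm (j+1))
             + ((j:ℝ)+1) * ((((j+1:ℕ):ℝ)+1) * harm (j+1+1)))
        = ((n:ℝ)+1) * (((n:ℝ)+2) * (harm (n+1) - Hdisc t1 t2 t3) + 1) := by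
      rw [Finset.sum_congr rfl (fun j _ =>
        show wgt t1 t2 t3 n j * (((n:ℝ) - j) * (((j:ℝ)+1) * harm (j+1))
              + ((j:ℝ)+1) * ((((j+1:ℕ):ℝ)+1) * harm (j+1+1)))
          = (wgt t1 t2 t3 n j * (((j:ℝ)+1) * harm (j+1))) * ((n:ℝ)+2)
            + wgt t1 t2 t3 n j * ((j:ℝ)+1)
        from by
          rw [harm_succ (j+1)]
          have hj : ((j:ℝ)+1)+1 ≠ 0 := by positivity
          push_cast
          field_simp
          ring)]
      rw [Finset.sum_add_distrib, ← Finset.sum_mul, ih, sum_wgt_lin t1 t2 t3 hn]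
      ring
    have h3 := hstep.trans h2
    have h4 := mul_left_cancel₀ hne h3
    simp only [Nat.add_sub_cancel]
    rw [h4, harm_succ (n+1)]
    have hn2 : ((n:ℝ)+1)+1 ≠ 0 := by positivity
    push_cast
    field_simp
    ring

lemma key_identity (t1 t2 t3 : ℕ) {n : ℕ} (hn : t1+t2+t3+2 ≤ n) (α β γ : ℝ) :
    ∑ j ∈ Finset.range (n-1), wgt t1 t2 t3 n j
        * (α*(((j:ℝ)+1) * harm (j+1)) + β*((j:ℝ)+1) + γ)
      = α*(((n:ℝ)+1)*(harm (n+1) - Hdisc t1 t2 t3)) + β*((n:ℝ)+1) + 3*γ := by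
  have e : ∀ j : ℕ, wgt t1 t2 t3 n j * (α*(((j:ℝ)+1) * harm (j+1)) + β*((j:ℝ)+1) + γ)
      = α*(wgt t1 t2 t3 n j * (((j:ℝ)+1) * harm (j+1)))
        + β*(wgt t1 t2 t3 n j * ((j:ℝ)+1)) + γ * wgt t1 t2 t3 n j := fun j => by ring
  rw [Finset.sum_congr rfl (fun j _ => e j)]
  simp only [Finset.sum_add_distrib, ← Finset.mul_sum]
  rw [sum_wgt_harm t1 t2 t3 hn, sum_wgt_lin t1 t2 t3 hn, sum_wgt t1 t2 t3 hn]
  ring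

lemma Hdisc_pos (t1 t2 t3 : ℕ) : 0 < Hdisc t1 t2 t3 := by
  unfold Hdisc
  have h1 : harm (t1+1) < harm (t1+t2+t3+3) := harm_lt (by omega)
  have h2 : harm (t2+1) < harm (t1+t2+t3+3) := harm_lt (by omega)
  have h3 : harm (t3+1) < harm (t1+t2+t3+3) := harm_lt (by omega)
  have hd : (0:ℝ) < (t1:ℝ)+t2+t3+3 := by positivity
  have p1 : (0:ℝ) < ((t1:ℝ)+1) / ((t1:ℝ)+t2+t3+3) := by positivity
  have p2 : (0:ℝ) < ((t2:ℝ)+1) / ((t1:ℝ)+t2+t3+3) := by positivity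
  have p3 : (0:ℝ) < ((t3:ℝ)+1) / ((t1:ℝ)+t2+t3+3) := by positivity
  have q1 := mul_pos p1 (sub_pos.2 h1)
  have q2 := mul_pos p2 (sub_pos.2 h2)
  have q3 := mul_pos p3 (sub_pos.2 h3)
  linarith
/- ### Comparison lemma -/

lemma bound_above (t1 t2 t3 w : ℕ) (C T : ℕ → ℝ)
    (hrec : ∀ n : ℕ, w < n →
      C n = T n + ∑ j ∈ Finset.range (n - 1), wgt t1 t2 t3 n j * C j)
    (α β γ : ℝ) (n1 : ℕ) (hn1 : w ≤ n1) (hk1 : t1+t2+t3+2 ≤ n1)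
    (htoll : ∀ m : ℕ, n1 < m → T m ≤ α * Hdisc t1 t2 t3 * ((m:ℝ)+1) - 2*γ)
    (hbase : ∀ j : ℕ, j ≤ n1 → C j ≤ α*(((j:ℝ)+1)*harm (j+1)) + β*((j:ℝ)+1) + γ) :
    ∀ n, C n ≤ α*(((n:ℝ)+1)*harm (n+1)) + β*((n:ℝ)+1) + γ := by
  intro n
  induction n using Nat.strong_induction_on with
  | _ n IH =>
    rcases le_or_gt n n1 with h | h
    · exact hbase n h
    · rw [hrec n (lt_of_le_of_lt hn1 h)]
      have hsum : ∑ j ∈ Finset.range (n-1), wgt t1 t2 t3 n j * C j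
          ≤ ∑ j ∈ Finset.range (n-1), wgt t1 t2 t3 n j
              * (α*(((j:ℝ)+1)*harm (j+1)) + β*((j:ℝ)+1) + γ) := by
        refine Finset.sum_le_sum (fun j hj => ?_)
        have hjn : j < n := by
          have := Finset.mem_range.1 hj; omega
        exact mul_le_mul_of_nonneg_left (IH j hjn) (wgt_nonneg t1 t2 t3 n j)
      have hid := key_identity t1 t2 t3 (show t1+t2+t3+2 ≤ n by omega) α β γ
      rw [hid] at hsum
      have ht' := htoll n h
      have hh := harm_lt (show 0 < n + 1 by omega)
      linarith
/- ### Asymptotics of the comparison solutions -/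

lemma harm_eq_harmonic (n : ℕ) : harm n = ((harmonic n : ℚ) : ℝ) := by
  unfold harm harmonic
  push_cast
  simp [one_div]

lemma tendsto_log_nat : Tendsto (fun n : ℕ => Real.log n) atTop atTop :=
  Real.tendsto_log_atTop.comp tendsto_natCast_atTop_atTop

lemma tendsto_harm_sub_log :
    Tendsto (fun n : ℕ => harm (n+1) - Real.log n) atTop
      (nhds Real.eulerMascheroniConstant) := by
  have h1 : Tendsto (fun n : ℕ => ((harmonic (n+1) : ℚ) : ℝ) - Real.log ((↑(n+1) : ℝ) + 1))
      atTop (nhds Real.eulerMascheroniConstant) :=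
    Real.tendsto_harmonic_sub_log_add_one.comp (tendsto_add_atTop_nat 1)
  have h2 : Tendsto (fun n : ℕ => Real.log ((↑(n+1) : ℝ) + 1) - Real.log n) atTop (nhds 0) := by
    have h0 : Tendsto (fun n : ℕ => 2/(n:ℝ)) atTop (nhds 0) :=
      tendsto_const_nhds.div_atTop tendsto_natCast_atTop_atTop
    have hc : Tendsto (fun n : ℕ => 1 + 2/(n:ℝ)) atTop (nhds 1) := by
      simpa using (tendsto_const_nhds (x := (1:ℝ)) (f := atTop)).add h0
    have hl : Tendsto (fun n : ℕ => Real.log (1 + 2/(n:ℝ))) atTop (nhds 0) := by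
      have hcont := (Real.continuousAt_log (one_ne_zero)).tendsto
      have := hcont.comp hc
      rw [Real.log_one] at this; exact this
    refine Tendsto.congr' ?_ hl
    filter_upwards [eventually_ge_atTop 1] with n hn
    have hn0 : (n:ℝ) ≠ 0 := by
      have : 0 < n := hn
      positivity
    have e1 : (1:ℝ) + 2/(n:ℝ) = ((n:ℝ)+2)/(n:ℝ) := by
      rw [add_div, div_self hn0]
    have e2 : ((↑(n+1) : ℝ) + 1) = (n:ℝ)+2 := by push_cast; ring
    rw [e1, e2, Real.log_div (by positivity) hn0]
  have := h1.add h2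
  simp only [add_zero, sub_add_sub_cancel] at this
  refine Tendsto.congr' ?_ this
  filter_upwards with n
  rw [harm_eq_harmonic]

lemma tendsto_harm_div_log :
    Tendsto (fun n : ℕ => harm (n+1) / Real.log n) atTop (nhds 1) := by
  have hd : Tendsto (fun n : ℕ => (harm (n+1) - Real.log n) / Real.log n) atTop (nhds 0) :=
    tendsto_harm_sub_log.div_atTop tendsto_log_nat
  have h1 : Tendsto (fun n : ℕ => (harm (n+1) - Real.log n) / Real.log n + 1) atTop (nhds 1) := by
    simpa using hd.add (tendsto_const_nhds (x := (1:ℝ)) (f := atTop))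
  refine Tendsto.congr' ?_ h1
  filter_upwards [tendsto_log_nat.eventually_gt_atTop 0] with n hn
  rw [sub_div, div_self hn.ne']
  ring

lemma tendsto_X_div (α β γ : ℝ) :
    Tendsto (fun n : ℕ =>
        (α*(((n:ℝ)+1)*harm (n+1)) + β*((n:ℝ)+1) + γ) / ((n:ℝ)*Real.log n))
      atTop (nhds α) := by
  have hnlog : Tendsto (fun n : ℕ => (n:ℝ)*Real.log n) atTop atTop :=
    tendsto_natCast_atTop_atTop.atTop_mul_atTop₀ tendsto_log_nat
  have hinv : Tendsto (fun n : ℕ => ((n:ℝ)*Real.log n)⁻¹) atTop (nhds 0) :=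
    hnlog.inv_tendsto_atTop
  have hloginv : Tendsto (fun n : ℕ => (Real.log n)⁻¹) atTop (nhds 0) :=
    tendsto_log_nat.inv_tendsto_atTop
  have hA : Tendsto (fun n : ℕ => ((n:ℝ)+1)/(n:ℝ)) atTop (nhds 1) := by
    have h0 : Tendsto (fun n : ℕ => 1/(n:ℝ)) atTop (nhds 0) :=
      tendsto_const_nhds.div_atTop tendsto_natCast_atTop_atTop
    have h1 : Tendsto (fun n : ℕ => 1 + 1/(n:ℝ)) atTop (nhds 1) := by
      simpa using (tendsto_const_nhds (x := (1:ℝ)) (f := atTop)).add h0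
    refine Tendsto.congr' ?_ h1
    filter_upwards [eventually_ge_atTop 1] with n hn
    have hn0 : (n:ℝ) ≠ 0 := by
      have : 0 < n := hn
      positivity
    field_simp
  have hH := tendsto_harm_div_log
  have hcomb := (((hA.mul hH).const_mul α).add
    (((hA.mul hloginv).const_mul β).add (hinv.const_mul γ)))
  have hval : α * (1*1) + (β * (1*0) + γ * 0) = α := by ring
  rw [hval] at hcomb
  refine Tendsto.congr' ?_ hcomb
  filter_upwards [eventually_ge_atTop 2] with n hn
  have hn1 : (1:ℝ) < (n:ℝ) := by
    have : (2:ℕ) ≤ n := hn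
    have := (Nat.cast_le (α := ℝ)).2 this
    norm_num at this ⊢
    linarith
  have hn0 : (n:ℝ) ≠ 0 := by linarith
  have hlog : Real.log n ≠ 0 := (Real.log_pos hn1).ne'
  field_simp
  ring
/-- If `C_n = T_n + ∑_{j=0}^{n−2} w_{n,j} C_j` for `n > w ≥ k` and `T_n = a n + O(1)` with
`a > 0`, then `C_n / (n ln n) → a / H(t)`. -/
theorem stmt0 (t1 t2 t3 w : ℕ) (hw : t1 + t2 + t3 + 2 ≤ w)
    (C T : ℕ → ℝ) (a : ℝ) (ha : 0 < a)
    (hT : (fun n : ℕ => T n - a * n) =O[atTop] (fun _ : ℕ => (1 : ℝ)))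
    (hrec : ∀ n : ℕ, w < n →
      C n = T n + ∑ j ∈ Finset.range (n - 1), wgt t1 t2 t3 n j * C j) :
    Tendsto (fun n : ℕ => C n / ((n : ℝ) * Real.log n)) atTop
      (nhds (a / Hdisc t1 t2 t3)) := by
  have hHt : 0 < Hdisc t1 t2 t3 := Hdisc_pos t1 t2 t3
  obtain ⟨c, hc⟩ := hT.bound
  rw [Filter.eventually_atTop] at hc
  obtain ⟨n0, hn0⟩ := hc
  set K : ℝ := |c| with hK
  have hK0 : 0 ≤ K := abs_nonneg c
  have hTb : ∀ m : ℕ, n0 ≤ m → |T m - a * m| ≤ K := by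
    intro m hm
    have h := hn0 m hm
    simp only [norm_one, mul_one, Real.norm_eq_abs] at h
    exact h.trans (le_abs_self c)
  clear_value K
  set n1 : ℕ := max w n0 with hn1def
  have hwn1 : w ≤ n1 := le_max_left _ _
  have hkn1 : t1+t2+t3+2 ≤ n1 := le_trans hw hwn1
  have hn0n1 : n0 ≤ n1 := le_max_right _ _
  rw [Metric.tendsto_nhds]
  intro ε hε
  set αp : ℝ := a/Hdisc t1 t2 t3 + ε/4 with hαp
  set γp : ℝ := -(K/2) with hγp
  set βp : ℝ := ∑ j ∈ Finset.range (n1+1),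
      |C j - αp*(((j:ℝ)+1)*harm (j+1)) - γp| with hβp
  have hβp0 : 0 ≤ βp := Finset.sum_nonneg (fun j _ => abs_nonneg _)
  clear_value αp γp βp
  have hub : ∀ n : ℕ, C n ≤ αp*(((n:ℝ)+1)*harm (n+1)) + βp*((n:ℝ)+1) + γp := by
    refine bound_above t1 t2 t3 w C T hrec αp βp γp n1 hwn1 hkn1 ?_ ?_
    · intro m hm
      have h1 := abs_le.1 (hTb m (by omega))
      have h2' : αp * Hdisc t1 t2 t3 * ((m:ℝ)+1)
          = a*(m:ℝ) + a + (ε/4) * Hdisc t1 t2 t3 * ((m:ℝ)+1) := by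
        rw [hαp]; field_simp
      have hm0 : (0:ℝ) ≤ (m:ℝ) := Nat.cast_nonneg m
      have hpos : 0 ≤ (ε/4) * Hdisc t1 t2 t3 * ((m:ℝ)+1) :=
        mul_nonneg (mul_nonneg (by linarith) hHt.le) (by linarith)
      linarith [h1.2]
    · intro j hj
      have hmem : j ∈ Finset.range (n1+1) := Finset.mem_range.2 (by omega)
      have hsingle : |C j - αp*(((j:ℝ)+1)*harm (j+1)) - γp| ≤ βp := by
        rw [hβp]
        exact Finset.single_le_sum
          (f := fun j => |C j - αp*(((j:ℝ)+1)*harm (j+1)) - γp|)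
          (fun i _ => abs_nonneg _) hmem
      have h3 : C j - αp*(((j:ℝ)+1)*harm (j+1)) - γp ≤ βp := (le_abs_self _).trans hsingle
      have h4 : βp ≤ βp*((j:ℝ)+1) :=
        le_mul_of_one_le_right hβp0 (by have := Nat.cast_nonneg (α := ℝ) j; linarith)
      linarith
  set αm : ℝ := a/Hdisc t1 t2 t3 - ε/4 with hαm
  set γm : ℝ := (K+a)/2 with hγm
  set βm : ℝ := ∑ j ∈ Finset.range (n1+1),
      |(-C j) - (-αm)*(((j:ℝ)+1)*harm (j+1)) - (-γm)| with hβm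
  have hβm0 : 0 ≤ βm := Finset.sum_nonneg (fun j _ => abs_nonneg _)
  clear_value αm γm βm
  have hrec' : ∀ n : ℕ, w < n →
      (fun n => -C n) n = (fun n => -T n) n
        + ∑ j ∈ Finset.range (n - 1), wgt t1 t2 t3 n j * (fun n => -C n) j := by
    intro n hn
    have h := hrec n hn
    have hs : ∑ j ∈ Finset.range (n-1), wgt t1 t2 t3 n j * (-C j)
        = -∑ j ∈ Finset.range (n-1), wgt t1 t2 t3 n j * C j := by
      simp [mul_neg]
    simp only
    rw [hs, h]
    ring
  have hlb' : ∀ n : ℕ, -C n ≤ (-αm)*(((n:ℝ)+1)*harm (n+1)) + βm*((n:ℝ)+1) + (-γm) := by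
    refine bound_above t1 t2 t3 w (fun n => -C n) (fun n => -T n) hrec'
      (-αm) βm (-γm) n1 hwn1 hkn1 ?_ ?_
    · intro m hm
      have h1 := abs_le.1 (hTb m (by omega))
      have h2' : αm * Hdisc t1 t2 t3 * ((m:ℝ)+1)
          = a*(m:ℝ) + a - (ε/4) * Hdisc t1 t2 t3 * ((m:ℝ)+1) := by
        rw [hαm]; field_simp
      have hm0 : (0:ℝ) ≤ (m:ℝ) := Nat.cast_nonneg m
      have hpos : 0 ≤ (ε/4) * Hdisc t1 t2 t3 * ((m:ℝ)+1) :=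
        mul_nonneg (mul_nonneg (by linarith) hHt.le) (by linarith)
      show -T m ≤ (-αm) * Hdisc t1 t2 t3 * ((m:ℝ)+1) - 2*(-γm)
      have hneg : (-αm) * Hdisc t1 t2 t3 * ((m:ℝ)+1) = -(αm * Hdisc t1 t2 t3 * ((m:ℝ)+1)) := by
        ring
      rw [hneg, h2']
      linarith [h1.1]
    · intro j hj
      have hmem : j ∈ Finset.range (n1+1) := Finset.mem_range.2 (by omega)
      have hsingle : |(-C j) - (-αm)*(((j:ℝ)+1)*harm (j+1)) - (-γm)| ≤ βm := by
        rw [hβm]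
        exact Finset.single_le_sum
          (f := fun j => |(-C j) - (-αm)*(((j:ℝ)+1)*harm (j+1)) - (-γm)|)
          (fun i _ => abs_nonneg _) hmem
      have h3 : (-C j) - (-αm)*(((j:ℝ)+1)*harm (j+1)) - (-γm) ≤ βm :=
        (le_abs_self _).trans hsingle
      have h4 : βm ≤ βm*((j:ℝ)+1) :=
        le_mul_of_one_le_right hβm0 (by have := Nat.cast_nonneg (α := ℝ) j; linarith)
      show -C j ≤ (-αm)*(((j:ℝ)+1)*harm (j+1)) + βm*((j:ℝ)+1) + (-γm)
      linarith
  have hevp := Metric.tendsto_nhds.1 (tendsto_X_div αp βp γp) (ε/4) (by positivity)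
  have hevm := Metric.tendsto_nhds.1 (tendsto_X_div αm (-βm) γm) (ε/4) (by positivity)
  filter_upwards [hevp, hevm, eventually_ge_atTop 2] with n hp hm hn2
  rw [Real.dist_eq] at hp hm ⊢
  have hn2' : (2:ℝ) ≤ (n:ℝ) := by exact_mod_cast hn2
  have hL : 0 < (n:ℝ)*Real.log n := mul_pos (by linarith) (Real.log_pos (by linarith))
  have hup : C n / ((n:ℝ)*Real.log n)
      ≤ (αp*(((n:ℝ)+1)*harm (n+1)) + βp*((n:ℝ)+1) + γp) / ((n:ℝ)*Real.log n) := by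
    gcongr
    exact hub n
  have hlo : (αm*(((n:ℝ)+1)*harm (n+1)) + (-βm)*((n:ℝ)+1) + γm) / ((n:ℝ)*Real.log n)
      ≤ C n / ((n:ℝ)*Real.log n) := by
    gcongr
    have := hlb' n
    linarith
  have h5 := abs_lt.1 hp
  have h6 := abs_lt.1 hm
  rw [abs_lt]
  constructor
  · have := h6.1
    have := hlo
    have : a / Hdisc t1 t2 t3 - ε < C n / ((n:ℝ)*Real.log n) := by
      have e1 : αm - ε/4 < (αm*(((n:ℝ)+1)*harm (n+1)) + (-βm)*((n:ℝ)+1) + γm)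
          / ((n:ℝ)*Real.log n) := by linarith [h6.1]
      have e2 : αm = a/Hdisc t1 t2 t3 - ε/4 := hαm
      linarith
    linarith
  · have e1 : (αp*(((n:ℝ)+1)*harm (n+1)) + βp*((n:ℝ)+1) + γp) / ((n:ℝ)*Real.log n)
        < αp + ε/4 := by linarith [h5.2]
    have e2 : αp = a/Hdisc t1 t2 t3 + ε/4 := hαp
    linarith
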